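/- If random variables U, V, X, Y, Z satisfy the Markov chain U - V - X - (Y,Z), then I(X;U,Z) + I(X;V|U,Y) = I(X;V,Y) - I(X;Y|U) + I(X;Z|U). -/

import Mathlib

open Finset Real

noncomputable def prob {Ω α : Type*} [Fintype Ω] [DecidableEq α]
    (w : Ω → ℝ) (X : Ω → α) (a : α) : ℝ := ∑ ω, if X ω = a then w ω else 0

noncomputable def ent {Ω α : Type*} [Fintype Ω] [Fintype α] [DecidableEq α]
    (w : Ω → ℝ) (X : Ω → α) : ℝ := -∑ a, prob w X a * Real.logb 2 (prob w X a)

noncomputable def condEnt {Ω α β : Type*} [Fintype Ω] [Fintype α] [DecidableEq α]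
    [Fintype β] [DecidableEq β] (w : Ω → ℝ) (X : Ω → α) (Y : Ω → β) : ℝ :=
  ent w (fun ω => (X ω, Y ω)) - ent w Y

noncomputable def mi {Ω α β : Type*} [Fintype Ω] [Fintype α] [DecidableEq α]
    [Fintype β] [DecidableEq β] (w : Ω → ℝ) (X : Ω → α) (Y : Ω → β) : ℝ :=
  ent w X + ent w Y - ent w (fun ω => (X ω, Y ω))

noncomputable def cmi {Ω α β γ : Type*} [Fintype Ω] [Fintype α] [DecidableEq α]
    [Fintype β] [DecidableEq β] [Fintype γ] [DecidableEq γ]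
    (w : Ω → ℝ) (X : Ω → α) (Y : Ω → β) (Z : Ω → γ) : ℝ :=
  condEnt w X Z - condEnt w X (fun ω => (Y ω, Z ω))

def IsPMF {Ω : Type*} [Fintype Ω] (w : Ω → ℝ) : Prop :=
  (∀ ω, 0 ≤ w ω) ∧ ∑ ω, w ω = 1

/-- `A` and `C` are conditionally independent given `B`. -/
def CondIndep {Ω α β γ : Type*} [Fintype Ω] [DecidableEq α] [DecidableEq β] [DecidableEq γ]
    (w : Ω → ℝ) (A : Ω → α) (B : Ω → β) (C : Ω → γ) : Prop :=
  ∀ a b c, prob w (fun ω => (A ω, B ω, C ω)) (a, b, c) * prob w B b =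
    prob w (fun ω => (A ω, B ω)) (a, b) * prob w (fun ω => (B ω, C ω)) (b, c)

/-- Binary entropy function (base 2). -/
noncomputable def binEnt (x : ℝ) : ℝ := -(x * Real.logb 2 x) - (1 - x) * Real.logb 2 (1 - x)

section auxLemmas

variable {Ω α β γ : Type*} [Fintype Ω]

lemma prob_nonneg [DecidableEq α] (w : Ω → ℝ) (hw : ∀ ω, 0 ≤ w ω) (X : Ω → α) (a : α) :
    0 ≤ prob w X a :=
  Finset.sum_nonneg fun ω _ => by split <;> simp [hw ω]

lemma prob_mono [DecidableEq α] [DecidableEq β] (w : Ω → ℝ) (hw : ∀ ω, 0 ≤ w ω)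
    (X : Ω → α) (Y : Ω → β) (a : α) (b : β) (h : ∀ ω, X ω = a → Y ω = b) :
    prob w X a ≤ prob w Y b := by
  refine Finset.sum_le_sum fun ω _ => ?_
  by_cases hx : X ω = a
  · simp [hx, h ω hx]
  · simp only [hx, if_false]; split <;> simp [hw ω]

lemma prob_comp [Fintype α] [DecidableEq α] [DecidableEq β] (w : Ω → ℝ) (X : Ω → α)
    (f : α → β) (b : β) :
    prob w (fun ω => f (X ω)) b = ∑ a, if f a = b then prob w X a else 0 := by
  unfold prob
  have h : ∀ a : α, (if f a = b then ∑ ω, if X ω = a then w ω else 0 else 0)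
      = ∑ ω, if X ω = a then (if f (X ω) = b then w ω else 0) else 0 := by
    intro a
    split_ifs with hfa
    · refine Finset.sum_congr rfl fun ω _ => ?_
      split_ifs with h2 <;> simp_all
    · symm
      refine Finset.sum_eq_zero fun ω _ => ?_
      split_ifs with h2 h3 <;> simp_all
  rw [Finset.sum_congr rfl fun a _ => h a, Finset.sum_comm]
  refine Finset.sum_congr rfl fun ω _ => ?_
  rw [Finset.sum_ite_eq Finset.univ (X ω)]
  simp

lemma sum_prob_comp [Fintype α] [DecidableEq α] [Fintype β] [DecidableEq β]
    (w : Ω → ℝ) (X : Ω → α) (f : α → β) (c : β → ℝ) :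
    ∑ b, prob w (fun ω => f (X ω)) b * c b = ∑ a, prob w X a * c (f a) := by
  simp_rw [prob_comp, Finset.sum_mul, ite_mul, zero_mul]
  rw [Finset.sum_comm]
  refine Finset.sum_congr rfl fun a _ => ?_
  rw [Finset.sum_ite_eq Finset.univ (f a)]
  simp

lemma prob_relabel [Fintype α] [DecidableEq α] [DecidableEq β] (w : Ω → ℝ) (X : Ω → α)
    (e : α ≃ β) (b : β) :
    prob w (fun ω => e (X ω)) b = prob w X (e.symm b) := by
  unfold prob
  refine Finset.sum_congr rfl fun ω _ => ?_
  congr 1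
  simp [Equiv.apply_eq_iff_eq_symm_apply]

lemma ent_relabel [Fintype α] [DecidableEq α] [Fintype β] [DecidableEq β]
    (w : Ω → ℝ) (X : Ω → α) (e : α ≃ β) :
    ent w (fun ω => e (X ω)) = ent w X := by
  unfold ent
  congr 1
  rw [← Equiv.sum_comp e
    (fun b => prob w (fun ω => e (X ω)) b * Real.logb 2 (prob w (fun ω => e (X ω)) b))]
  refine Finset.sum_congr rfl fun a _ => ?_
  rw [prob_relabel]
  simp

lemma sum_if_const {ι : Type*} [Fintype ι] {c : Prop} [Decidable c] (f : ι → ℝ) :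
    (∑ i, if c then f i else 0) = if c then ∑ i, f i else 0 := by
  split <;> simp

lemma ent_add_of_condIndep [Fintype α] [DecidableEq α] [Fintype β] [DecidableEq β]
    [Fintype γ] [DecidableEq γ]
    (w : Ω → ℝ) (hw : ∀ ω, 0 ≤ w ω) (A : Ω → α) (B : Ω → β) (C : Ω → γ)
    (h : CondIndep w A B C) :
    ent w (fun ω => (A ω, B ω, C ω)) + ent w B
      = ent w (fun ω => (A ω, B ω)) + ent w (fun ω => (B ω, C ω)) := by
  set T : Ω → α × β × γ := fun ω => (A ω, B ω, C ω) with hT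
  have hB : ent w B = -∑ t, prob w T t * Real.logb 2 (prob w B (t.2.1)) := by
    unfold ent
    rw [← sum_prob_comp w T (fun t => t.2.1) (fun b => Real.logb 2 (prob w B b))]
  have hAB : ent w (fun ω => (A ω, B ω))
      = -∑ t, prob w T t * Real.logb 2 (prob w (fun ω => (A ω, B ω)) (t.1, t.2.1)) := by
    unfold ent
    rw [← sum_prob_comp w T (fun t => (t.1, t.2.1))
      (fun q => Real.logb 2 (prob w (fun ω => (A ω, B ω)) q))]
  have hBC : ent w (fun ω => (B ω, C ω))
      = -∑ t, prob w T t * Real.logb 2 (prob w (fun ω => (B ω, C ω)) t.2) := by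
    unfold ent
    rw [← sum_prob_comp w T (fun t => t.2)
      (fun q => Real.logb 2 (prob w (fun ω => (B ω, C ω)) q))]
  rw [hB, hAB, hBC]
  unfold ent
  rw [← neg_add, ← neg_add, neg_inj, ← Finset.sum_add_distrib, ← Finset.sum_add_distrib]
  refine Finset.sum_congr rfl fun t _ => ?_
  rcases eq_or_lt_of_le (prob_nonneg w hw T t) with h0 | hpos
  · rw [← h0]; ring
  · have hBpos : 0 < prob w B t.2.1 :=
      lt_of_lt_of_le hpos (prob_mono w hw T B t t.2.1 (fun ω hω => by rw [← hω]))
    have hABpos : 0 < prob w (fun ω => (A ω, B ω)) (t.1, t.2.1) :=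
      lt_of_lt_of_le hpos (prob_mono w hw T _ t (t.1, t.2.1) (fun ω hω => by rw [← hω]))
    have hBCpos : 0 < prob w (fun ω => (B ω, C ω)) t.2 :=
      lt_of_lt_of_le hpos (prob_mono w hw T _ t t.2 (fun ω hω => by rw [← hω]))
    have hkey := h t.1 t.2.1 t.2.2
    have ht : (t.1, t.2.1, t.2.2) = t := rfl
    rw [ht] at hkey
    have hlog : Real.logb 2 (prob w T t) + Real.logb 2 (prob w B t.2.1)
        = Real.logb 2 (prob w (fun ω => (A ω, B ω)) (t.1, t.2.1))
          + Real.logb 2 (prob w (fun ω => (B ω, C ω)) t.2) := by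
      rw [← Real.logb_mul (ne_of_gt hpos) (ne_of_gt hBpos),
        ← Real.logb_mul (ne_of_gt hABpos) (ne_of_gt hBCpos), hkey]
    nlinarith [hlog]

end auxLemmas

lemma sum_ite_dep_const {ι : Type*} [Fintype ι] {c : Prop} (d : ι → Decidable c) [Decidable c]
    (f : ι → ℝ) : (∑ i, @ite ℝ c (d i) (f i) 0) = if c then ∑ i, f i else 0 := by
  by_cases hc : c <;> simp [hc]

lemma sum_ite_eq_dep {ι : Type*} [Fintype ι] (a : ι) (d : ∀ i : ι, Decidable (i = a))
    (f : ι → ℝ) : (∑ i, @ite ℝ (i = a) (d i) (f i) 0) = f a := by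
  rw [Finset.sum_eq_single a]
  · simp
  · intro b _ hb
    simp [hb]
  · simp

lemma sum_ite_eq_dep' {ι : Type*} [Fintype ι] (a : ι) (d : ∀ i : ι, Decidable (a = i))
    (f : ι → ℝ) : (∑ i, @ite ℝ (a = i) (d i) (f i) 0) = f a := by
  rw [Finset.sum_eq_single a]
  · simp
  · intro b _ hb
    simp [Ne.symm hb]
  · simp

/-- under the Markov chain U - V - X - (Y,Z),
`I(X;U,Z) + I(X;V|U,Y) = I(X;V,Y) - I(X;Y|U) + I(X;Z|U)`. -/
theorem leakage_identity {Ω 𝒰 𝒱 𝒳 𝒴 𝒵 : Type*} [Fintype Ω]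
    [Fintype 𝒰] [DecidableEq 𝒰] [Fintype 𝒱] [DecidableEq 𝒱]
    [Fintype 𝒳] [DecidableEq 𝒳] [Fintype 𝒴] [DecidableEq 𝒴]
    [Fintype 𝒵] [DecidableEq 𝒵]
    (w : Ω → ℝ) (hw : IsPMF w)
    (U : Ω → 𝒰) (V : Ω → 𝒱) (X : Ω → 𝒳) (Y : Ω → 𝒴) (Z : Ω → 𝒵)
    (hUV : CondIndep w U V (fun ω => (X ω, Y ω, Z ω)))
    (hXYZ : CondIndep w (fun ω => (U ω, V ω)) X (fun ω => (Y ω, Z ω))) :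
    mi w X (fun ω => (U ω, Z ω)) + cmi w X V (fun ω => (U ω, Y ω)) =
      mi w X (fun ω => (V ω, Y ω)) - cmi w X Y U + cmi w X Z U := by
  obtain ⟨hw0, -⟩ := hw
  -- the derived conditional independence X ⊥ U given (V, Y)
  have hCI : CondIndep w X (fun ω => (V ω, Y ω)) U := by
    intro x b u
    obtain ⟨v, y⟩ := b
    have W5eq : ∀ (q : 𝒰 × 𝒱 × 𝒳 × 𝒴 × 𝒵),
        prob w (fun ω => (U ω, V ω, X ω, Y ω, Z ω)) q
          = prob w (fun ω => (U ω, V ω, X ω, Y ω, Z ω)) q := fun _ => rfl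
    -- marginal identities
    have hA : prob w (fun ω => (X ω, (V ω, Y ω), U ω)) (x, (v, y), u)
        = ∑ z, prob w (fun ω => (U ω, V ω, X ω, Y ω, Z ω)) (u, v, x, y, z) := by
      rw [show prob w (fun ω => (X ω, (V ω, Y ω), U ω)) (x, (v, y), u)
          = prob w (fun ω => ((fun t : 𝒰 × 𝒱 × 𝒳 × 𝒴 × 𝒵 => (t.2.2.1, (t.2.1, t.2.2.2.1), t.1))
              ((fun ω => (U ω, V ω, X ω, Y ω, Z ω)) ω))) (x, (v, y), u) from rfl,
        prob_comp w (fun ω => (U ω, V ω, X ω, Y ω, Z ω))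
          (fun t => (t.2.2.1, (t.2.1, t.2.2.2.1), t.1)) (x, (v, y), u)]
      simp [Fintype.sum_prod_type, Prod.mk.injEq, ite_and, sum_if_const,
        Finset.sum_ite_eq, Finset.sum_ite_eq']
      try (dsimp only; simp [sum_if_const, Finset.sum_ite_eq, Finset.sum_ite_eq'])
      simp only [sum_ite_dep_const, sum_ite_eq_dep, sum_ite_eq_dep']
    have hB : prob w (fun ω => (V ω, Y ω)) (v, y)
        = ∑ u', ∑ x', ∑ z, prob w (fun ω => (U ω, V ω, X ω, Y ω, Z ω)) (u', v, x', y, z) := by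
      rw [show prob w (fun ω => (V ω, Y ω)) (v, y)
          = prob w (fun ω => ((fun t : 𝒰 × 𝒱 × 𝒳 × 𝒴 × 𝒵 => (t.2.1, t.2.2.2.1))
              ((fun ω => (U ω, V ω, X ω, Y ω, Z ω)) ω))) (v, y) from rfl,
        prob_comp w (fun ω => (U ω, V ω, X ω, Y ω, Z ω))
          (fun t => (t.2.1, t.2.2.2.1)) (v, y)]
      simp [Fintype.sum_prod_type, Prod.mk.injEq, ite_and, sum_if_const,
        Finset.sum_ite_eq, Finset.sum_ite_eq']
      try (dsimp only; simp [sum_if_const, Finset.sum_ite_eq, Finset.sum_ite_eq'])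
      simp only [sum_ite_dep_const, sum_ite_eq_dep, sum_ite_eq_dep']
    have hC : prob w (fun ω => (X ω, (V ω, Y ω))) (x, (v, y))
        = ∑ u', ∑ z, prob w (fun ω => (U ω, V ω, X ω, Y ω, Z ω)) (u', v, x, y, z) := by
      rw [show prob w (fun ω => (X ω, (V ω, Y ω))) (x, (v, y))
          = prob w (fun ω => ((fun t : 𝒰 × 𝒱 × 𝒳 × 𝒴 × 𝒵 => (t.2.2.1, (t.2.1, t.2.2.2.1)))
              ((fun ω => (U ω, V ω, X ω, Y ω, Z ω)) ω))) (x, (v, y)) from rfl,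
        prob_comp w (fun ω => (U ω, V ω, X ω, Y ω, Z ω))
          (fun t => (t.2.2.1, (t.2.1, t.2.2.2.1))) (x, (v, y))]
      simp [Fintype.sum_prod_type, Prod.mk.injEq, ite_and, sum_if_const,
        Finset.sum_ite_eq, Finset.sum_ite_eq']
      try (dsimp only; simp [sum_if_const, Finset.sum_ite_eq, Finset.sum_ite_eq'])
      simp only [sum_ite_dep_const, sum_ite_eq_dep, sum_ite_eq_dep']
    have hD : prob w (fun ω => ((V ω, Y ω), U ω)) ((v, y), u)
        = ∑ x', ∑ z, prob w (fun ω => (U ω, V ω, X ω, Y ω, Z ω)) (u, v, x', y, z) := by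
      rw [show prob w (fun ω => ((V ω, Y ω), U ω)) ((v, y), u)
          = prob w (fun ω => ((fun t : 𝒰 × 𝒱 × 𝒳 × 𝒴 × 𝒵 => ((t.2.1, t.2.2.2.1), t.1))
              ((fun ω => (U ω, V ω, X ω, Y ω, Z ω)) ω))) ((v, y), u) from rfl,
        prob_comp w (fun ω => (U ω, V ω, X ω, Y ω, Z ω))
          (fun t => ((t.2.1, t.2.2.2.1), t.1)) ((v, y), u)]
      simp [Fintype.sum_prod_type, Prod.mk.injEq, ite_and, sum_if_const,
        Finset.sum_ite_eq, Finset.sum_ite_eq']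
      try (dsimp only; simp [sum_if_const, Finset.sum_ite_eq, Finset.sum_ite_eq'])
      simp only [sum_ite_dep_const, sum_ite_eq_dep, sum_ite_eq_dep']
    have hE : prob w V v
        = ∑ u', ∑ x', ∑ y', ∑ z, prob w (fun ω => (U ω, V ω, X ω, Y ω, Z ω)) (u', v, x', y', z) := by
      rw [show prob w V v
          = prob w (fun ω => ((fun t : 𝒰 × 𝒱 × 𝒳 × 𝒴 × 𝒵 => t.2.1)
              ((fun ω => (U ω, V ω, X ω, Y ω, Z ω)) ω))) v from rfl,
        prob_comp w (fun ω => (U ω, V ω, X ω, Y ω, Z ω)) (fun t => t.2.1) v]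
      simp [Fintype.sum_prod_type, Prod.mk.injEq, ite_and, sum_if_const,
        Finset.sum_ite_eq, Finset.sum_ite_eq']
      try (dsimp only; simp [sum_if_const, Finset.sum_ite_eq, Finset.sum_ite_eq'])
      simp only [sum_ite_dep_const, sum_ite_eq_dep, sum_ite_eq_dep']
    have hF : ∀ u' : 𝒰, prob w (fun ω => (U ω, V ω)) (u', v)
        = ∑ x', ∑ y', ∑ z, prob w (fun ω => (U ω, V ω, X ω, Y ω, Z ω)) (u', v, x', y', z) := by
      intro u'
      rw [show prob w (fun ω => (U ω, V ω)) (u', v)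
          = prob w (fun ω => ((fun t : 𝒰 × 𝒱 × 𝒳 × 𝒴 × 𝒵 => (t.1, t.2.1))
              ((fun ω => (U ω, V ω, X ω, Y ω, Z ω)) ω))) (u', v) from rfl,
        prob_comp w (fun ω => (U ω, V ω, X ω, Y ω, Z ω)) (fun t => (t.1, t.2.1)) (u', v)]
      simp [Fintype.sum_prod_type, Prod.mk.injEq, ite_and, sum_if_const,
        Finset.sum_ite_eq, Finset.sum_ite_eq']
      try (dsimp only; simp [sum_if_const, Finset.sum_ite_eq, Finset.sum_ite_eq'])
      simp only [sum_ite_dep_const, sum_ite_eq_dep, sum_ite_eq_dep']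
    have hG : ∀ (x' : 𝒳) (y' : 𝒴) (z : 𝒵),
        prob w (fun ω => (V ω, (X ω, Y ω, Z ω))) (v, (x', y', z))
          = ∑ u', prob w (fun ω => (U ω, V ω, X ω, Y ω, Z ω)) (u', v, x', y', z) := by
      intro x' y' z
      rw [show prob w (fun ω => (V ω, (X ω, Y ω, Z ω))) (v, (x', y', z))
          = prob w (fun ω => ((fun t : 𝒰 × 𝒱 × 𝒳 × 𝒴 × 𝒵 => (t.2.1, t.2.2))
              ((fun ω => (U ω, V ω, X ω, Y ω, Z ω)) ω))) (v, (x', y', z)) from rfl,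
        prob_comp w (fun ω => (U ω, V ω, X ω, Y ω, Z ω)) (fun t => (t.2.1, t.2.2)) (v, (x', y', z))]
      simp [Fintype.sum_prod_type, Prod.mk.injEq, ite_and, sum_if_const,
        Finset.sum_ite_eq, Finset.sum_ite_eq']
      try (dsimp only; simp [sum_if_const, Finset.sum_ite_eq, Finset.sum_ite_eq'])
    have key : ∀ (u' : 𝒰) (x' : 𝒳) (y' : 𝒴) (z : 𝒵),
        prob w (fun ω => (U ω, V ω, X ω, Y ω, Z ω)) (u', v, x', y', z) * prob w V v
          = prob w (fun ω => (U ω, V ω)) (u', v)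
            * prob w (fun ω => (V ω, (X ω, Y ω, Z ω))) (v, (x', y', z)) :=
      fun u' x' y' z => hUV u' v (x', y', z)
    have hsum : ∑ u', prob w (fun ω => (U ω, V ω)) (u', v) = prob w V v := by
      rw [hE]
      exact Finset.sum_congr rfl fun u' _ => hF u'
    show prob w (fun ω => (X ω, (V ω, Y ω), U ω)) (x, (v, y), u)
          * prob w (fun ω => (V ω, Y ω)) (v, y)
        = prob w (fun ω => (X ω, (V ω, Y ω))) (x, (v, y))
          * prob w (fun ω => ((V ω, Y ω), U ω)) ((v, y), u)
    rcases eq_or_lt_of_le (prob_nonneg w hw0 V v) with hpv0 | hpv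
    · -- degenerate case : P(V = v) = 0
      have hB0 : prob w (fun ω => (V ω, Y ω)) (v, y) = 0 :=
        le_antisymm (by
          calc prob w (fun ω => (V ω, Y ω)) (v, y) ≤ prob w V v :=
                prob_mono w hw0 _ V (v, y) v (fun ω hω => congrArg Prod.fst hω)
            _ = 0 := hpv0.symm)
          (prob_nonneg w hw0 _ _)
      have hD0 : prob w (fun ω => ((V ω, Y ω), U ω)) ((v, y), u) = 0 :=
        le_antisymm (by
          calc prob w (fun ω => ((V ω, Y ω), U ω)) ((v, y), u) ≤ prob w V v :=
                prob_mono w hw0 _ V ((v, y), u) v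
                  (fun ω hω => congrArg (fun p => p.1.1) hω)
            _ = 0 := hpv0.symm)
          (prob_nonneg w hw0 _ _)
      rw [hB0, hD0, mul_zero, mul_zero]
    · -- main case : P(V = v) > 0
      have hpvne : prob w V v ≠ 0 := ne_of_gt hpv
      -- products with prob w V v
      have e1 : (∑ z, prob w (fun ω => (U ω, V ω, X ω, Y ω, Z ω)) (u, v, x, y, z)) * prob w V v
          = prob w (fun ω => (U ω, V ω)) (u, v)
            * ∑ z, prob w (fun ω => (V ω, (X ω, Y ω, Z ω))) (v, (x, y, z)) := by
        rw [Finset.sum_mul, Finset.mul_sum]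
        exact Finset.sum_congr rfl fun z _ => key u x y z
      have e3 : (∑ u', ∑ z, prob w (fun ω => (U ω, V ω, X ω, Y ω, Z ω)) (u', v, x, y, z))
            * prob w V v
          = prob w V v * ∑ z, prob w (fun ω => (V ω, (X ω, Y ω, Z ω))) (v, (x, y, z)) := by
        rw [Finset.sum_mul]
        have : ∀ u' ∈ Finset.univ (α := 𝒰),
            (∑ z, prob w (fun ω => (U ω, V ω, X ω, Y ω, Z ω)) (u', v, x, y, z)) * prob w V v
              = prob w (fun ω => (U ω, V ω)) (u', v)
                * ∑ z, prob w (fun ω => (V ω, (X ω, Y ω, Z ω))) (v, (x, y, z)) := by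
          intro u' _
          rw [Finset.sum_mul, Finset.mul_sum]
          exact Finset.sum_congr rfl fun z _ => key u' x y z
        rw [Finset.sum_congr rfl this, ← Finset.sum_mul, hsum]
      have e4 : (∑ x', ∑ z, prob w (fun ω => (U ω, V ω, X ω, Y ω, Z ω)) (u, v, x', y, z))
            * prob w V v
          = prob w (fun ω => (U ω, V ω)) (u, v)
            * ∑ x', ∑ z, prob w (fun ω => (V ω, (X ω, Y ω, Z ω))) (v, (x', y, z)) := by
        rw [Finset.sum_mul, Finset.mul_sum]
        refine Finset.sum_congr rfl fun x' _ => ?_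
        rw [Finset.sum_mul, Finset.mul_sum]
        exact Finset.sum_congr rfl fun z _ => key u x' y z
      have e2 : (∑ u', ∑ x', ∑ z, prob w (fun ω => (U ω, V ω, X ω, Y ω, Z ω)) (u', v, x', y, z))
            * prob w V v
          = prob w V v * ∑ x', ∑ z, prob w (fun ω => (V ω, (X ω, Y ω, Z ω))) (v, (x', y, z)) := by
        rw [Finset.sum_mul]
        have : ∀ u' ∈ Finset.univ (α := 𝒰),
            (∑ x', ∑ z, prob w (fun ω => (U ω, V ω, X ω, Y ω, Z ω)) (u', v, x', y, z))
                * prob w V v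
              = prob w (fun ω => (U ω, V ω)) (u', v)
                * ∑ x', ∑ z, prob w (fun ω => (V ω, (X ω, Y ω, Z ω))) (v, (x', y, z)) := by
          intro u' _
          rw [Finset.sum_mul, Finset.mul_sum]
          refine Finset.sum_congr rfl fun x' _ => ?_
          rw [Finset.sum_mul, Finset.mul_sum]
          exact Finset.sum_congr rfl fun z _ => key u' x' y z
        rw [Finset.sum_congr rfl this, ← Finset.sum_mul, hsum]
      rw [hA, hB, hC, hD]
      apply mul_right_cancel₀ hpvne
      apply mul_right_cancel₀ hpvne
      calc (∑ z, prob w (fun ω => (U ω, V ω, X ω, Y ω, Z ω)) (u, v, x, y, z))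
            * (∑ u', ∑ x', ∑ z, prob w (fun ω => (U ω, V ω, X ω, Y ω, Z ω)) (u', v, x', y, z))
            * prob w V v * prob w V v
          = ((∑ z, prob w (fun ω => (U ω, V ω, X ω, Y ω, Z ω)) (u, v, x, y, z)) * prob w V v)
            * ((∑ u', ∑ x', ∑ z, prob w (fun ω => (U ω, V ω, X ω, Y ω, Z ω)) (u', v, x', y, z))
              * prob w V v) := by ring
        _ = (prob w (fun ω => (U ω, V ω)) (u, v)
              * ∑ z, prob w (fun ω => (V ω, (X ω, Y ω, Z ω))) (v, (x, y, z)))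
            * (prob w V v
              * ∑ x', ∑ z, prob w (fun ω => (V ω, (X ω, Y ω, Z ω))) (v, (x', y, z))) := by
          rw [e1, e2]
        _ = (prob w V v * ∑ z, prob w (fun ω => (V ω, (X ω, Y ω, Z ω))) (v, (x, y, z)))
            * (prob w (fun ω => (U ω, V ω)) (u, v)
              * ∑ x', ∑ z, prob w (fun ω => (V ω, (X ω, Y ω, Z ω))) (v, (x', y, z))) := by
          ring
        _ = ((∑ u', ∑ z, prob w (fun ω => (U ω, V ω, X ω, Y ω, Z ω)) (u', v, x, y, z))
              * prob w V v)
            * ((∑ x', ∑ z, prob w (fun ω => (U ω, V ω, X ω, Y ω, Z ω)) (u, v, x', y, z))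
              * prob w V v) := by rw [e3, e4]
        _ = (∑ u', ∑ z, prob w (fun ω => (U ω, V ω, X ω, Y ω, Z ω)) (u', v, x, y, z))
            * (∑ x', ∑ z, prob w (fun ω => (U ω, V ω, X ω, Y ω, Z ω)) (u, v, x', y, z))
            * prob w V v * prob w V v := by ring
  -- the key entropy identity
  have star : ent w (fun ω => (X ω, (V ω, Y ω), U ω)) + ent w (fun ω => (V ω, Y ω))
      = ent w (fun ω => (X ω, (V ω, Y ω))) + ent w (fun ω => ((V ω, Y ω), U ω)) :=
    ent_add_of_condIndep w hw0 X (fun ω => (V ω, Y ω)) U hCI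
  -- relabeling identities
  have r1 : ent w (fun ω => (Z ω, U ω)) = ent w (fun ω => (U ω, Z ω)) :=
    ent_relabel w (fun ω => (U ω, Z ω))
      ⟨fun p => (p.2, p.1), fun p => (p.2, p.1), fun p => rfl, fun p => rfl⟩
  have r2 : ent w (fun ω => (X ω, (Z ω, U ω))) = ent w (fun ω => (X ω, (U ω, Z ω))) :=
    ent_relabel w (fun ω => (X ω, (U ω, Z ω)))
      ⟨fun p => (p.1, (p.2.2, p.2.1)), fun p => (p.1, (p.2.2, p.2.1)),
        fun p => rfl, fun p => rfl⟩
  have r3 : ent w (fun ω => (Y ω, U ω)) = ent w (fun ω => (U ω, Y ω)) :=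
    ent_relabel w (fun ω => (U ω, Y ω))
      ⟨fun p => (p.2, p.1), fun p => (p.2, p.1), fun p => rfl, fun p => rfl⟩
  have r4 : ent w (fun ω => (X ω, (Y ω, U ω))) = ent w (fun ω => (X ω, (U ω, Y ω))) :=
    ent_relabel w (fun ω => (X ω, (U ω, Y ω)))
      ⟨fun p => (p.1, (p.2.2, p.2.1)), fun p => (p.1, (p.2.2, p.2.1)),
        fun p => rfl, fun p => rfl⟩
  have r5 : ent w (fun ω => (X ω, (V ω, Y ω), U ω))
      = ent w (fun ω => (X ω, (V ω, (U ω, Y ω)))) :=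
    ent_relabel w (fun ω => (X ω, (V ω, (U ω, Y ω))))
      ⟨fun p => (p.1, ((p.2.1, p.2.2.2), p.2.2.1)),
       fun q => (q.1, (q.2.1.1, (q.2.2, q.2.1.2))),
       fun p => rfl, fun q => rfl⟩
  have r6 : ent w (fun ω => ((V ω, Y ω), U ω)) = ent w (fun ω => (V ω, (U ω, Y ω))) :=
    ent_relabel w (fun ω => (V ω, (U ω, Y ω)))
      ⟨fun p => ((p.1, p.2.2), p.2.1),
       fun q => (q.1.1, (q.2, q.1.2)),
       fun p => rfl, fun q => rfl⟩
  simp only [mi, cmi, condEnt]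
  linarith [star, r1, r2, r3, r4, r5, r6]
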